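/- Let h₂, h_e, g, g₂, g_e, σ₂, σ_e be strictly positive real numbers satisfying h₂·σ_e ≥ h_e·σ₂, g₂·σ_e ≥ g_e·σ₂, and g₂·h_e ≥ g_e·h₂, and let p > 0. Define the composite normalized channel gains H₂(ρ) = (h₂ + √ρ·g·g₂)²/σ₂² and H_e(ρ) = (h_e + √ρ·g·g_e)²/σ_e². Then the secrecy sum-rate S(ρ) = (1/2)·log₂((1 + H₂(ρ)·p)/(1 + H_e(ρ)·p)) is monotone nondecreasing on ρ ∈ [0, 1]; in particular, the optimal reflection coefficient maximizing S over [0, 1] is ρ* = 1. -/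
import Mathlib

set_option maxHeartbeats 1000000

lemma ratio_key (h2 he a b σ2 σe p t s : ℝ)
    (hh2 : 0 < h2) (hhe : 0 < he) (ha : 0 < a) (hb : 0 < b)
    (hσ2 : 0 < σ2) (hσe : 0 < σe) (hp : 0 < p)
    (ht : 0 ≤ t) (hts : t ≤ s)
    (h1 : he * σ2 ≤ h2 * σe) (h2c : b * σ2 ≤ a * σe) (h3 : b * h2 ≤ a * he) :
    (1 + (h2 + t * a) ^ 2 / σ2 ^ 2 * p) / (1 + (he + t * b) ^ 2 / σe ^ 2 * p) ≤
    (1 + (h2 + s * a) ^ 2 / σ2 ^ 2 * p) / (1 + (he + s * b) ^ 2 / σe ^ 2 * p) := by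
  have hs : 0 ≤ s := ht.trans hts
  have hS2 : (0:ℝ) < σ2 ^ 2 := by positivity
  have hSe : (0:ℝ) < σe ^ 2 := by positivity
  have hde : (0:ℝ) < 1 + (he + t * b) ^ 2 / σe ^ 2 * p := by positivity
  have hde' : (0:ℝ) < 1 + (he + s * b) ^ 2 / σe ^ 2 * p := by positivity
  rw [div_le_div_iff₀ hde hde']
  have F2 : (h2 + t * a) * (he + s * b) ≤ (h2 + s * a) * (he + t * b) := by nlinarith
  have G2 : (h2 + t * a) ^ 2 * (he + s * b) ^ 2 ≤ (h2 + s * a) ^ 2 * (he + t * b) ^ 2 := by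
    rw [← mul_pow, ← mul_pow]
    exact pow_le_pow_left₀ (by positivity) F2 2
  have e1 : he * b * σ2 ^ 2 ≤ h2 * a * σe ^ 2 := by
    nlinarith [mul_le_mul h1 h2c (by positivity) (by positivity : (0:ℝ) ≤ h2 * σe)]
  have e2 : b ^ 2 * σ2 ^ 2 ≤ a ^ 2 * σe ^ 2 := by
    nlinarith [mul_le_mul h2c h2c (by positivity) (by positivity : (0:ℝ) ≤ a * σe)]
  have F1 : ((he + s * b) ^ 2 - (he + t * b) ^ 2) * σ2 ^ 2 ≤
      ((h2 + s * a) ^ 2 - (h2 + t * a) ^ 2) * σe ^ 2 := by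
    nlinarith [mul_le_mul_of_nonneg_left e1 (by linarith : (0:ℝ) ≤ s - t),
      mul_le_mul_of_nonneg_left e2 (mul_nonneg (by linarith : (0:ℝ) ≤ s - t) (by linarith : (0:ℝ) ≤ s + t))]
  have huv : (he + s * b) ^ 2 / σe ^ 2 - (he + t * b) ^ 2 / σe ^ 2 ≤
      (h2 + s * a) ^ 2 / σ2 ^ 2 - (h2 + t * a) ^ 2 / σ2 ^ 2 := by
    rw [div_sub_div_same, div_sub_div_same, div_le_div_iff₀ hSe hS2]
    linarith
  have hprod : (h2 + t * a) ^ 2 / σ2 ^ 2 * ((he + s * b) ^ 2 / σe ^ 2) ≤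
      (h2 + s * a) ^ 2 / σ2 ^ 2 * ((he + t * b) ^ 2 / σe ^ 2) := by
    rw [div_mul_div_comm, div_mul_div_comm]
    gcongr
  set u := (h2 + t * a) ^ 2 / σ2 ^ 2 with hu
  set u' := (h2 + s * a) ^ 2 / σ2 ^ 2 with hu'
  set v := (he + t * b) ^ 2 / σe ^ 2 with hv
  set v' := (he + s * b) ^ 2 / σe ^ 2 with hv'
  nlinarith [mul_le_mul_of_nonneg_left huv hp.le, mul_le_mul_of_nonneg_left hprod (sq_nonneg p)]



/-- Under the stated channel conditions, the secrecy sum-rate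
S(ρ) = (1/2)·log₂((1 + H₂(ρ)·p)/(1 + H_e(ρ)·p)) with composite gains
H₂(ρ) = (h₂ + √ρ·g·g₂)²/σ₂² and H_e(ρ) = (h_e + √ρ·g·g_e)²/σ_e² is monotone
nondecreasing on [0, 1]; in particular ρ* = 1 maximizes S over [0, 1]. -/
theorem optimal_reflection_coefficient_is_one
    (h2 he g g2 ge σ2 σe p : ℝ)
    (hh2 : 0 < h2) (hhe : 0 < he) (hg : 0 < g) (hg2 : 0 < g2) (hge : 0 < ge)
    (hσ2 : 0 < σ2) (hσe : 0 < σe) (hp : 0 < p)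
    (hcond1 : he * σ2 ≤ h2 * σe) (hcond2 : ge * σ2 ≤ g2 * σe) (hcond3 : ge * h2 ≤ g2 * he) :
    MonotoneOn (fun ρ : ℝ => (1/2) * Real.logb 2
      ((1 + ((h2 + Real.sqrt ρ * (g * g2)) ^ 2 / σ2 ^ 2) * p) /
       (1 + ((he + Real.sqrt ρ * (g * ge)) ^ 2 / σe ^ 2) * p))) (Set.Icc 0 1) ∧
    ∀ ρ ∈ Set.Icc (0:ℝ) 1,
      (1/2) * Real.logb 2
        ((1 + ((h2 + Real.sqrt ρ * (g * g2)) ^ 2 / σ2 ^ 2) * p) /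
         (1 + ((he + Real.sqrt ρ * (g * ge)) ^ 2 / σe ^ 2) * p)) ≤
      (1/2) * Real.logb 2
        ((1 + ((h2 + Real.sqrt 1 * (g * g2)) ^ 2 / σ2 ^ 2) * p) /
         (1 + ((he + Real.sqrt 1 * (g * ge)) ^ 2 / σe ^ 2) * p)) := by
  have hb2c : (g * ge) * σ2 ≤ (g * g2) * σe := by nlinarith
  have hb3 : (g * ge) * h2 ≤ (g * g2) * he := by nlinarith
  have hmono : MonotoneOn (fun ρ : ℝ => (1/2) * Real.logb 2
      ((1 + ((h2 + Real.sqrt ρ * (g * g2)) ^ 2 / σ2 ^ 2) * p) /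
       (1 + ((he + Real.sqrt ρ * (g * ge)) ^ 2 / σe ^ 2) * p))) (Set.Icc 0 1) := by
    intro x hx y hy hxy
    dsimp only
    have hkey := ratio_key h2 he (g * g2) (g * ge) σ2 σe p (Real.sqrt x) (Real.sqrt y)
      hh2 hhe (by positivity) (by positivity) hσ2 hσe hp (Real.sqrt_nonneg x)
      (Real.sqrt_le_sqrt hxy) hcond1 hb2c hb3
    have hpos : (0:ℝ) < (1 + ((h2 + Real.sqrt x * (g * g2)) ^ 2 / σ2 ^ 2) * p) /
        (1 + ((he + Real.sqrt x * (g * ge)) ^ 2 / σe ^ 2) * p) := by positivity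
    have hlog := Real.logb_le_logb_of_le (b := 2) (by norm_num) hpos hkey
    linarith
  refine ⟨hmono, fun ρ hρ => hmono hρ (by norm_num) hρ.2⟩
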